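/- Let C and K be small categories and F : C ⥤ K an essentially surjective functor admitting a right adjoint. Let M be the iso-comma category of the Yoneda embedding y_C : C ⥤ Pr(C) and the restriction functor F* : Pr(K) ⥤ Pr(C): objects of M are triples (c, P, φ) with c an object of C, P a presheaf on K, and φ : y_C(c) ≅ F*(P) an isomorphism. Then the projection functor M ⥤ C, (c, P, φ) ↦ c, is a monadic right adjoint. -/

import Mathlib

open CategoryTheory CategoryTheory.Limits Opposite

universe u

namespace Stmt5Aux

variable {C K : Type u} [SmallCategory C] [SmallCategory K]

/-- The restriction functor `F* : Pr(K) ⥤ Pr(C)`. -/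
abbrev res (F : C ⥤ K) : (Kᵒᵖ ⥤ Type u) ⥤ (Cᵒᵖ ⥤ Type u) :=
  (Functor.whiskeringLeft Cᵒᵖ Kᵒᵖ (Type u)).obj F.op

/-- The iso-comma category of `yoneda` and `res F`. -/
abbrev M (F : C ⥤ K) :=
  ObjectProperty.FullSubcategory (fun X : Comma yoneda (res F) => IsIso X.hom)

/-- The projection `M F ⥤ C`. -/
abbrev proj (F : C ⥤ K) : M F ⥤ C :=
  ObjectProperty.ι _ ⋙ Comma.fst yoneda (res F)

lemma M_comp_left {F : C ⥤ K} {X Y Z : M F} (a : X ⟶ Y) (b : Y ⟶ Z) :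
    (a ≫ b).hom.left = a.hom.left ≫ b.hom.left := rfl

lemma M_comp_right {F : C ⥤ K} {X Y Z : M F} (a : X ⟶ Y) (b : Y ⟶ Z) :
    (a ≫ b).hom.right = a.hom.right ≫ b.hom.right := rfl

/-! ### `proj` reflects isomorphisms -/

theorem res_reflects (F : C ⥤ K) (hs : F.EssSurj) {P P' : Kᵒᵖ ⥤ Type u}
    (g : P ⟶ P') (h : IsIso ((res F).map g)) : IsIso g := by
  haveI := hs
  have : ∀ k : Kᵒᵖ, IsIso (g.app k) := by
    intro k
    let c := F.objPreimage k.unop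
    let e : F.obj c ≅ k.unop := F.objObjPreimageIso k.unop
    have h1 : IsIso (g.app (op (F.obj c))) :=
      (inferInstance : IsIso (((res F).map g).app (op c)))
    have hnat : g.app k ≫ P'.map e.hom.op = P.map e.hom.op ≫ g.app (op (F.obj c)) :=
      (g.naturality e.hom.op).symm
    have h2 : IsIso (P'.map e.hom.op) := inferInstance
    have h3 : IsIso (g.app k ≫ P'.map e.hom.op) := by
      rw [hnat]; infer_instance
    exact IsIso.of_isIso_comp_right _ (P'.map e.hom.op)
  exact NatIso.isIso_of_isIso_app g

theorem proj_reflectsIsos (F : C ⥤ K) (hs : F.EssSurj) :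
    (proj F).ReflectsIsomorphisms := by
  constructor
  intro X Y f hf
  haveI : IsIso X.obj.hom := X.property
  haveI : IsIso Y.obj.hom := Y.property
  haveI hfl : IsIso f.hom.left := hf
  have hw : (res F).map f.hom.right = inv X.obj.hom ≫ yoneda.map f.hom.left ≫ Y.obj.hom := by
    rw [IsIso.eq_inv_comp]; exact f.hom.w.symm
  haveI : IsIso ((res F).map f.hom.right) := by rw [hw]; infer_instance
  haveI : IsIso f.hom.right := res_reflects F hs f.hom.right inferInstance
  have : f.hom = (Comma.isoMk (asIso f.hom.left) (asIso f.hom.right) f.hom.w).hom :=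
    Comma.hom_ext _ _ rfl rfl
  haveI : IsIso ((ObjectProperty.ι
      (fun X : Comma yoneda (res F) => IsIso X.hom)).map f) := by
    rw [show (ObjectProperty.ι _).map f
        = (Comma.isoMk (asIso f.hom.left) (asIso f.hom.right) f.hom.w).hom from this]
    infer_instance
  exact isIso_of_fully_faithful (ObjectProperty.ι _) f

/-! ### The left adjoint -/

section Adj

variable (F : C ⥤ K) {G : K ⥤ C} (adj : F ⊣ G)

/-- The canonical isomorphism `y(G(F c)) ≅ F*(y(F c))`. -/
def phi (c : C) : yoneda.obj (G.obj (F.obj c)) ≅ (res F).obj (yoneda.obj (F.obj c)) :=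
  NatIso.ofComponents
    (fun d => Equiv.toIso (adj.homEquiv d.unop (F.obj c)).symm)
    (by
      intro d d' m
      ext u
      exact adj.homEquiv_naturality_left_symm m.unop u)

lemma phi_app (c : C) (d : Cᵒᵖ) (u : d.unop ⟶ G.obj (F.obj c)) :
    (phi F adj c).hom.app d u = (adj.homEquiv d.unop (F.obj c)).symm u := rfl

/-- The left adjoint of the projection. -/
def Lfun : C ⥤ M F where
  obj c := ⟨⟨G.obj (F.obj c), yoneda.obj (F.obj c), (phi F adj c).hom⟩, inferInstance⟩
  map {c c'} f := ObjectProperty.homMk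
    { left := G.map (F.map f)
      right := yoneda.map (F.map f)
      w := by
        ext d u
        exact adj.homEquiv_naturality_right_symm u (F.map f) }
  map_id c := by
    apply ObjectProperty.hom_ext; apply Comma.hom_ext <;> simp <;> rfl
  map_comp f g := by
    apply ObjectProperty.hom_ext; apply Comma.hom_ext <;> simp <;> rfl

lemma Lfun_map_left {c c' : C} (f : c ⟶ c') :
    ((Lfun F adj).map f).hom.left = G.map (F.map f) := rfl

lemma Lfun_obj_hom (c : C) : ((Lfun F adj).obj c).obj.hom = (phi F adj c).hom := rfl

/-- The morphism in `M` induced by `u : c ⟶ X.left`. -/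
noncomputable def descHom (c : C) (X : M F) (u : c ⟶ X.obj.left) :
    (Lfun F adj).obj c ⟶ X := ObjectProperty.homMk <|
  haveI : IsIso X.obj.hom := X.property
  { left := Yoneda.fullyFaithful.preimage
      ((phi F adj c).hom ≫ (res F).map (yonedaEquiv.symm (X.obj.hom.app (op c) u))
        ≫ inv X.obj.hom)
    right := yonedaEquiv.symm (X.obj.hom.app (op c) u)
    w := by
      rw [Functor.FullyFaithful.map_preimage]
      simp
      erw [Category.assoc, Category.assoc, IsIso.inv_hom_id, Category.comp_id]; rfl }

lemma descHom_w (c : C) (X : M F) (u : c ⟶ X.obj.left) :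
    yoneda.map (descHom F adj c X u).hom.left ≫ X.obj.hom
      = (phi F adj c).hom ≫ (res F).map (yonedaEquiv.symm (X.obj.hom.app (op c) u)) :=
  (descHom F adj c X u).hom.w

/-- The hom equivalence of the adjunction `Lfun ⊣ proj`. -/
noncomputable def homEquivM (c : C) (X : M F) :
    ((Lfun F adj).obj c ⟶ X) ≃ (c ⟶ X.obj.left) where
  toFun m := adj.unit.app c ≫ m.hom.left
  invFun u := descHom F adj c X u
  left_inv m := by
    haveI : IsIso X.obj.hom := X.property
    have h1 : X.obj.hom.app (op c) (adj.unit.app c ≫ m.hom.left) = yonedaEquiv m.hom.right := by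
      have h0 := ConcreteCategory.congr_hom (NatTrans.congr_app m.hom.w (op c)) (adj.unit.app c)
      refine h0.trans ?_
      show m.hom.right.app (op (F.obj c)) ((adj.homEquiv c (F.obj c)).symm (adj.unit.app c)) = _
      rw [Adjunction.homEquiv_counit, adj.left_triangle_components]
      rfl
    have hr : (yonedaEquiv.symm (X.obj.hom.app (op c) (adj.unit.app c ≫ m.hom.left))
        : yoneda.obj (F.obj c) ⟶ X.obj.right) = m.hom.right := by
      rw [h1]; exact yonedaEquiv.symm_apply_apply m.hom.right
    apply ObjectProperty.hom_ext; apply Comma.hom_ext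
    · apply Yoneda.fullyFaithful.map_injective
      rw [← cancel_mono X.obj.hom]
      rw [descHom_w, hr]
      exact (m.hom.w).symm
    · exact hr
  right_inv u := by
    haveI : IsIso X.obj.hom := X.property
    apply Yoneda.fullyFaithful.map_injective
    rw [← cancel_mono X.obj.hom]
    dsimp only
    erw [Functor.map_comp, Category.assoc, descHom_w]
    ext d v
    simp only [FunctorToTypes.comp, yoneda_map_app, phi_app,
      Adjunction.homEquiv_counit, Functor.map_comp, Category.assoc,
      adj.left_triangle_components, Category.comp_id,
      yonedaEquiv_symm_app_apply]
    have := ConcreteCategory.congr_hom (X.obj.hom.naturality v.op) u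
    have hp : (phi F adj c).hom.app d (v ≫ adj.unit.app c) = F.map v := by
      refine (adj.homEquiv_naturality_left_symm v (adj.unit.app c)).trans ?_
      simp [Adjunction.homEquiv_counit]
    simpa [hp] using this.symm

lemma homEquivM_natural_left {c c' : C} (X : M F) (f : c' ⟶ c)
    (m : (Lfun F adj).obj c ⟶ X) :
    homEquivM F adj c' X ((Lfun F adj).map f ≫ m) = f ≫ homEquivM F adj c X m := by
  show adj.unit.app c' ≫ ((Lfun F adj).map f ≫ m).hom.left = f ≫ adj.unit.app c ≫ m.hom.left
  rw [M_comp_left, Lfun_map_left]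
  have h := adj.unit.naturality f
  simp only [Functor.comp_map, Functor.id_map] at h
  erw [← Category.assoc, ← h, Category.assoc]; rfl

/-- The adjunction `Lfun ⊣ proj`. -/
noncomputable def adjM : Lfun F adj ⊣ proj F :=
  Adjunction.mkOfHomEquiv
    { homEquiv := fun c X => homEquivM F adj c X
      homEquiv_naturality_left_symm := by
        intro c' c X f g
        rw [Equiv.symm_apply_eq]
        exact ((homEquivM_natural_left F adj X f _).trans
          (congrArg (f ≫ ·) (Equiv.apply_symm_apply (homEquivM F adj c X) g))).symm
      homEquiv_naturality_right := by
        intro c X Y m h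
        show adj.unit.app c ≫ (m ≫ h).hom.left = (adj.unit.app c ≫ m.hom.left) ≫ h.hom.left
        rw [M_comp_left]; exact (Category.assoc _ _ _).symm }

end Adj

/-! ### Coequalizers of split pairs -/

section Coeq

variable {F : C ⥤ K} {X Y : M F} (f g : X ⟶ Y) {Z : C} {π : Y.obj.left ⟶ Z}
variable (sc : IsSplitCoequalizer ((proj F).map f) ((proj F).map g) π)

/-- The coequalizer presheaf on `K`. -/
noncomputable abbrev Qc : Kᵒᵖ ⥤ Type u := coequalizer f.hom.right g.hom.right

/-- The colimit of `(res F).map f.hom.right, (res F).map g.hom.right` given by `res` of the coequalizer. -/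
noncomputable def ic1 :
    IsColimit (Cofork.ofπ ((res F).map (coequalizer.π f.hom.right g.hom.right))
      (by simp only [← Functor.map_comp]; rw [coequalizer.condition])
      : Cofork ((res F).map f.hom.right) ((res F).map g.hom.right)) :=
  isColimitOfHasCoequalizerOfPreservesColimit (res F) f.hom.right g.hom.right

/-- The iso of parallel pairs. -/
noncomputable def dIso :
    parallelPair ((res F).map f.hom.right) ((res F).map g.hom.right)
      ≅ parallelPair (yoneda.map ((proj F).map f)) (yoneda.map ((proj F).map g)) := by
  haveI : IsIso X.obj.hom := X.property
  haveI : IsIso Y.obj.hom := Y.property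
  refine parallelPair.ext (asIso X.obj.hom).symm (asIso Y.obj.hom).symm ?_ ?_
  · show (res F).map f.hom.right ≫ inv Y.obj.hom = inv X.obj.hom ≫ yoneda.map f.hom.left
    rw [IsIso.comp_inv_eq, Category.assoc, IsIso.eq_inv_comp]
    exact f.hom.w.symm
  · show (res F).map g.hom.right ≫ inv Y.obj.hom = inv X.obj.hom ≫ yoneda.map g.hom.left
    rw [IsIso.comp_inv_eq, Category.assoc, IsIso.eq_inv_comp]
    exact g.hom.w.symm

/-- The second colimit cocone, with apex `yoneda.obj Z`. -/
noncomputable def ic2 :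
    IsColimit ((Cocone.precompose (dIso f g).hom).obj (sc.map yoneda).asCofork) :=
  (IsColimit.precomposeHomEquiv (dIso f g) (sc.map yoneda).asCofork).symm
    (sc.map yoneda).isCoequalizer

/-- The comparison isomorphism. -/
noncomputable def psi : (res F).obj (Qc f g) ≅ yoneda.obj Z :=
  (ic1 f g).coconePointUniqueUpToIso (ic2 f g sc)

lemma psi_fac :
    haveI : IsIso Y.obj.hom := Y.property
    (res F).map (coequalizer.π f.hom.right g.hom.right) ≫ (psi f g sc).hom
      = inv Y.obj.hom ≫ yoneda.map π := by
  haveI : IsIso Y.obj.hom := Y.property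
  have h := (ic1 f g).comp_coconePointUniqueUpToIso_hom (ic2 f g sc)
    WalkingParallelPair.one
  simp [dIso] at h; exact h

lemma psi_fac' :
    haveI : IsIso Y.obj.hom := Y.property
    yoneda.map π ≫ (psi f g sc).inv
      = Y.obj.hom ≫ (res F).map (coequalizer.π f.hom.right g.hom.right) := by
  haveI : IsIso Y.obj.hom := Y.property
  rw [Iso.comp_inv_eq, Category.assoc, psi_fac f g sc, IsIso.hom_inv_id_assoc]

/-- The coequalizer object in `M`. -/
noncomputable def Zm : M F :=
  ⟨⟨Z, Qc f g, (psi f g sc).inv⟩, inferInstance⟩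

/-- The coequalizer projection in `M`. -/
noncomputable def eHom : Y ⟶ Zm f g sc := ObjectProperty.homMk
  { left := π
    right := coequalizer.π f.hom.right g.hom.right
    w := psi_fac' f g sc }

lemma eHom_left : (eHom f g sc).hom.left = π := rfl

/-- The cofork in `M`. -/
noncomputable def coeqCofork : Cofork f g :=
  Cofork.ofπ (eHom f g sc)
    (by
      apply ObjectProperty.hom_ext; apply Comma.hom_ext
      · exact sc.condition
      · exact coequalizer.condition f.hom.right g.hom.right)

/-- The cofork is a colimit. -/
noncomputable def coeqIsColimit : IsColimit (coeqCofork f g sc) := by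
  haveI : IsSplitEpi π := ⟨⟨⟨sc.rightSection, sc.rightSection_π⟩⟩⟩
  haveI : Epi (yoneda.map π) :=
    (IsSplitEpi.mk ⟨yoneda.map sc.rightSection,
      by rw [← yoneda.map_comp, sc.rightSection_π, yoneda.map_id]⟩).epi
  apply Cofork.IsColimit.mk'
  intro s
  have hl : (proj F).map f ≫ s.π.hom.left = (proj F).map g ≫ s.π.hom.left := by
    have := congrArg (fun x => x.hom.left) (Cofork.condition s)
    exact this
  have hr : f.hom.right ≫ s.π.hom.right = g.hom.right ≫ s.π.hom.right := by
    have := congrArg (fun x => x.hom.right) (Cofork.condition s)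
    exact this
  refine ⟨ObjectProperty.homMk
            { left := Cofork.IsColimit.desc sc.isCoequalizer s.π.hom.left hl
              right := coequalizer.desc s.π.hom.right hr
              w := ?_ }, ?_, ?_⟩
  · erw [← cancel_epi (yoneda.map π)]
    erw [← yoneda.map_comp_assoc,
      show π ≫ Cofork.IsColimit.desc sc.isCoequalizer s.π.hom.left hl = s.π.hom.left from
        Cofork.IsColimit.π_desc' sc.isCoequalizer s.π.hom.left hl]
    show yoneda.map s.π.hom.left ≫ _ = yoneda.map π ≫ (psi f g sc).inv ≫ _
    erw [← Category.assoc (yoneda.map π), psi_fac' f g sc, Category.assoc, ← Functor.map_comp,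
      coequalizer.π_desc]
    exact s.π.hom.w
  · apply ObjectProperty.hom_ext; apply Comma.hom_ext
    · exact Cofork.IsColimit.π_desc' sc.isCoequalizer s.π.hom.left hl
    · exact coequalizer.π_desc s.π.hom.right hr
  · intro m hm
    apply ObjectProperty.hom_ext; apply Comma.hom_ext
    · haveI : Epi π := inferInstance
      erw [← cancel_epi π]
      have := congrArg (fun x => x.hom.left) hm
      exact this.trans (Cofork.IsColimit.π_desc' sc.isCoequalizer s.π.hom.left hl).symm
    · apply coequalizer.hom_ext
      have := congrArg (fun x => x.hom.right) hm
      exact this.trans (coequalizer.π_desc s.π.hom.right hr).symm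

end Coeq

end Stmt5Aux

open Stmt5Aux in
/-- paper's lem:Kl_pb_monadicity, 1-categorical form:
Let `F : C ⥤ K` be an essentially surjective functor between small categories
admitting a right adjoint.  Form the iso-comma category `M` of the Yoneda
embedding `y_C : C ⥤ Pr(C)` and the restriction functor `F* : Pr(K) ⥤ Pr(C)`,
i.e. the full subcategory of the comma category spanned by objects whose
structure map is an isomorphism.  Then the projection `M ⥤ C` is a monadic
right adjoint. -/
theorem stmt_5 {C K : Type u} [SmallCategory C] [SmallCategory K]
    (F : C ⥤ K) (hsurj : F.EssSurj) (hadj : F.IsLeftAdjoint) :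
    Nonempty (MonadicRightAdjoint
      (ObjectProperty.ι
          (fun X : Comma yoneda ((Functor.whiskeringLeft Cᵒᵖ Kᵒᵖ (Type u)).obj F.op) =>
            IsIso X.hom) ⋙
        Comma.fst yoneda ((Functor.whiskeringLeft Cᵒᵖ Kᵒᵖ (Type u)).obj F.op))) := by
  haveI := hadj
  haveI := hsurj
  haveI : (proj F).ReflectsIsomorphisms := proj_reflectsIsos F hsurj
  haveI : Monad.HasCoequalizerOfIsSplitPair (proj F) := ⟨fun {A B} f g hsp => by
    haveI := hsp
    have sc := HasSplitCoequalizer.isSplitCoequalizer ((proj F).map f) ((proj F).map g)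
    exact HasColimit.mk ⟨coeqCofork f g sc, coeqIsColimit f g sc⟩⟩
  haveI : Monad.PreservesColimitOfIsSplitPair (proj F) := ⟨fun {A B} f g hsp => by
    haveI := hsp
    have sc := HasSplitCoequalizer.isSplitCoequalizer ((proj F).map f) ((proj F).map g)
    exact preservesColimit_of_preserves_colimit_cocone (coeqIsColimit f g sc)
      ((isColimitMapCoconeCoforkEquiv (proj F) _).symm sc.isCoequalizer)⟩
  exact ⟨Monad.monadicOfHasPreservesGSplitCoequalizersOfReflectsIsomorphisms
    (adjM F (Adjunction.ofIsLeftAdjoint F))⟩
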